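/- Let G be a torsion-free group with an abelian normal subgroup A such that G/A is infinite cyclic, and let t ∈ G be an element whose image generates G/A. Put Ā = {a ∈ A : t a t⁻¹ = a}. Then Ā is a normal subgroup of G and the quotient G/Ā is torsion-free. -/

import Mathlib

/-- The subgroup `Ā = {a ∈ A : t * a * t⁻¹ = a}` of elements of a subgroup `A` of `G`
fixed under conjugation by `t`. -/
def fixedByConj {G : Type*} [Group G] (A : Subgroup G) (t : G) : Subgroup G where
  carrier := {a | a ∈ A ∧ t * a * t⁻¹ = a}
  one_mem' := ⟨one_mem A, by simp⟩
  mul_mem' := by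
    rintro a b ⟨haA, ha⟩ ⟨hbA, hb⟩
    refine ⟨mul_mem haA hbA, ?_⟩
    have : t * (a * b) * t⁻¹ = (t * a * t⁻¹) * (t * b * t⁻¹) := by group
    rw [this, ha, hb]
  inv_mem' := by
    rintro a ⟨haA, ha⟩
    refine ⟨inv_mem haA, ?_⟩
    have : t * a⁻¹ * t⁻¹ = (t * a * t⁻¹)⁻¹ := by group
    rw [this, ha]

/-- A monoid is torsion-free if its only element of finite order is the identity
(the Mathlib definition of December 2024, since removed). -/
def Monoid.IsTorsionFree (G : Type*) [Monoid G] : Prop :=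
  ∀ g : G, g ≠ 1 → ¬IsOfFinOrder g

/-- Let `G` be a torsion-free group with an abelian normal subgroup `A` such that
`G/A` is infinite cyclic, and let `t ∈ G` be an element whose image generates `G/A`.  Put
`Ā = {a ∈ A : t a t⁻¹ = a}`.  Then `Ā` is a normal subgroup of `G` and the quotient `G/Ā` is
torsion-free. -/
theorem stmt_2 {G : Type*} [Group G] (htf : Monoid.IsTorsionFree G)
    (A : Subgroup G) [A.Normal]
    (hab : ∀ a ∈ A, ∀ b ∈ A, a * b = b * a)
    (hcyc : Nonempty ((G ⧸ A) ≃* Multiplicative ℤ))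
    (t : G) (ht : Subgroup.zpowers ((t : G ⧸ A)) = ⊤) :
    (fixedByConj A t).Normal ∧
      ∀ [(fixedByConj A t).Normal], Monoid.IsTorsionFree (G ⧸ fixedByConj A t) := by
  obtain ⟨e⟩ := hcyc
  -- Ā is central
  have hcent : ∀ x ∈ fixedByConj A t, ∀ g : G, g * x = x * g := by
    rintro x ⟨hxA, hx⟩ g
    have hcomm : Commute t x := mul_inv_eq_iff_eq_mul.mp hx
    obtain ⟨k, hk⟩ : ∃ k : ℤ, ((g : G ⧸ A)) = ((t : G ⧸ A)) ^ k := by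
      have : (g : G ⧸ A) ∈ Subgroup.zpowers ((t : G ⧸ A)) := ht ▸ Subgroup.mem_top _
      obtain ⟨k, hk⟩ := this
      exact ⟨k, hk.symm⟩
    have haA : g * (t ^ k)⁻¹ ∈ A := by
      rw [← QuotientGroup.eq_one_iff]
      have : ((t ^ k : G) : G ⧸ A) = ((t : G ⧸ A)) ^ k := by
        simpa using map_zpow (QuotientGroup.mk' A) t k
      simp [this, ← hk]
    have hg : g = (g * (t ^ k)⁻¹) * t ^ k := by group
    have hcomm' : Commute (t ^ k) x := hcomm.zpow_left k
    calc g * x = (g * (t ^ k)⁻¹) * (t ^ k * x) := by group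
      _ = (g * (t ^ k)⁻¹) * (x * t ^ k) := by rw [hcomm']
      _ = ((g * (t ^ k)⁻¹) * x) * t ^ k := by group
      _ = (x * (g * (t ^ k)⁻¹)) * t ^ k := by rw [hab _ haA _ hxA]
      _ = x * g := by group
  have hnormal : (fixedByConj A t).Normal := by
    constructor
    intro x hx g
    have h := hcent x hx g
    have : g * x * g⁻¹ = x := by rw [h]; group
    rw [this]; exact hx
  refine ⟨hnormal, ?_⟩
  intro _
  intro q hq hfin
  obtain ⟨n, hn, hpow⟩ := isOfFinOrder_iff_pow_eq_one.mp hfin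
  obtain ⟨g, rfl⟩ := QuotientGroup.mk_surjective q
  have hgn : g ^ n ∈ fixedByConj A t := by
    rw [← QuotientGroup.eq_one_iff]
    simpa using hpow
  -- g ∈ A
  have hgA : g ∈ A := by
    have h1 : ((g : G ⧸ A)) ^ n = 1 := by
      have : ((g ^ n : G) : G ⧸ A) = 1 := (QuotientGroup.eq_one_iff _).mpr hgn.1
      simpa using this
    have h2 : (e (g : G ⧸ A)) ^ n = 1 := by rw [← map_pow, h1, map_one]
    have h3 : (n : ℤ) • Multiplicative.toAdd (e (g : G ⧸ A)) = 0 := by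
      have := congrArg Multiplicative.toAdd h2
      simpa [toAdd_pow] using this
    have h4 : Multiplicative.toAdd (e (g : G ⧸ A)) = 0 := by
      rcases smul_eq_zero.mp h3 with h | h
      · exact absurd (by exact_mod_cast h) hn.ne'
      · exact h
    have h5 : e (g : G ⧸ A) = 1 := by
      have := congrArg Multiplicative.ofAdd h4
      simpa using this
    have h6 : (g : G ⧸ A) = 1 := by
      apply e.injective; simpa using h5
    exact (QuotientGroup.eq_one_iff _).mp h6
  -- the commutator c = t g t⁻¹ g⁻¹ has c^n = 1
  set c := (t * g * t⁻¹) * g⁻¹ with hc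
  have hconjA : t * g * t⁻¹ ∈ A := Subgroup.Normal.conj_mem ‹A.Normal› g hgA t
  have hcc : Commute (t * g * t⁻¹) g⁻¹ := (Commute.inv_right (hab _ hconjA _ hgA))
  have hcn : c ^ n = 1 := by
    rw [hc, hcc.mul_pow]
    have h7 : (t * g * t⁻¹) ^ n = t * g ^ n * t⁻¹ := by
      simpa [MulAut.conj_apply] using (map_pow (MulAut.conj t) g n).symm
    rw [h7, inv_pow, hgn.2]
    group
  have hc1 : c = 1 := by
    by_contra h
    exact htf c h (isOfFinOrder_iff_pow_eq_one.mpr ⟨n, hn, hcn⟩)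
  have hfix : t * g * t⁻¹ = g := by
    have := hc1
    rw [hc, mul_inv_eq_one] at this
    exact this
  exact hq ((QuotientGroup.eq_one_iff _).mpr ⟨hgA, hfix⟩)
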